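/- Given k+1 distinct equidistant points x_{i+j} = x_i + jΔx for j = -k/2,…,k/2 (k even) and values U_{i+j}, there exists a unique polynomial p of degree at most k satisfying the box-average conditions (1/h)∫_{x_{i+j}-h/2}^{x_{i+j}+h/2} p(ξ)dξ = U_{i+j} for all j. -/

import Mathlib

open intervalIntegral

open Polynomial intervalIntegral

noncomputable def antider (p : ℝ[X]) : ℝ[X] :=
  p.sum fun n a => C (a / (n+1)) * X ^ (n+1)

lemma derivative_antider (p : ℝ[X]) : derivative (antider p) = p := by
  unfold antider
  rw [Polynomial.sum, map_sum]
  conv_rhs => rw [← sum_C_mul_X_pow_eq p, Polynomial.sum]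
  refine Finset.sum_congr rfl fun n _ => ?_
  rw [derivative_C_mul_X_pow]
  simp only [Nat.add_sub_cancel]
  congr 1
  rw [Nat.cast_add, Nat.cast_one]
  field_simp

lemma natDegree_antider_le (p : ℝ[X]) : (antider p).natDegree ≤ p.natDegree + 1 := by
  unfold antider
  refine (Polynomial.natDegree_sum_le _ _).trans ?_
  rw [Finset.fold_max_le]
  refine ⟨Nat.zero_le _, fun n hn => ?_⟩
  refine (natDegree_C_mul_le _ _).trans ?_
  simp only [natDegree_X_pow]
  exact Nat.succ_le_succ (Polynomial.le_natDegree_of_mem_supp n hn)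

lemma ftc_poly (p : ℝ[X]) (a b : ℝ) :
    ∫ ξ in a..b, p.eval ξ = (antider p).eval b - (antider p).eval a := by
  refine intervalIntegral.integral_deriv_eq_sub' (fun x => (antider p).eval x)
    (funext fun x => ?_) (fun x _ => (antider p).differentiableAt)
    (p.continuous_aeval.continuousOn)
  rw [Polynomial.deriv, derivative_antider]

lemma coeff_comp_linear (P : ℝ[X]) (c : ℝ) (m : ℕ) (hm : P.natDegree ≤ m) :
    (P.comp (X + C c)).coeff m = P.coeff m := by
  rcases eq_or_lt_of_le hm with h | h
  · have h1 : (P.comp (X + C c)).natDegree = P.natDegree := by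
      rw [natDegree_comp, natDegree_X_add_C, mul_one]
    rcases eq_or_ne P 0 with rfl | hP
    · simp
    have h2 : (P.comp (X + C c)).leadingCoeff = P.leadingCoeff := by
      rw [leadingCoeff_comp (by rw [natDegree_X_add_C]; norm_num)]
      simp [leadingCoeff_X_add_C]
    rw [← h]
    rw [show P.coeff P.natDegree = P.leadingCoeff from rfl, ← h2, leadingCoeff, h1]
  · rw [coeff_eq_zero_of_natDegree_lt, coeff_eq_zero_of_natDegree_lt h]
    rwa [natDegree_comp, natDegree_X_add_C, mul_one]

lemma natDegree_Qdiff (P : ℝ[X]) (c : ℝ) (n : ℕ) (hP : P.natDegree ≤ n + 1) :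
    (P.comp (X + C c) - P.comp (X + C (-c))).natDegree ≤ n := by
  set Q := P.comp (X + C c) - P.comp (X + C (-c)) with hQ
  have hd : Q.natDegree ≤ n + 1 := by
    refine (natDegree_sub_le _ _).trans ?_
    simp [natDegree_comp, natDegree_X_add_C, ← sub_eq_add_neg, natDegree_X_sub_C, hP]
  rcases eq_or_ne Q 0 with h0 | h0
  · simp [h0]
  by_contra hlt
  push_neg at hlt
  have he : Q.natDegree = n + 1 := le_antisymm hd hlt
  have : Q.coeff (n+1) ≠ 0 := by
    rw [← he]; exact Polynomial.coeff_ne_zero_of_eq_degree (degree_eq_natDegree h0)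
  apply this
  rw [hQ, coeff_sub, coeff_comp_linear P c _ hP, coeff_comp_linear P (-c) _ hP, sub_self]

lemma key_zero (k : ℕ) (hk : Even k) (Δx h xi : ℝ) (hΔx : 0 < Δx) (hh : 0 < h)
    (p : ℝ[X]) (hdeg : p.natDegree ≤ k)
    (hz : ∀ j ∈ Finset.Icc (-(k/2 : ℤ)) ((k : ℤ)/2),
      ∫ ξ in (xi + j * Δx - h/2)..(xi + j * Δx + h/2), p.eval ξ = 0) :
    p = 0 := by
  set P := antider p with hPdef
  set Q := P.comp (X + C (h/2)) - P.comp (X + C (-(h/2))) with hQdef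
  have hQeval : ∀ x : ℝ, Q.eval x = ∫ ξ in (x - h/2)..(x + h/2), p.eval ξ := by
    intro x
    rw [ftc_poly, hQdef, eval_sub, eval_comp, eval_comp]
    simp [sub_eq_add_neg, hPdef]
  have hQdeg : Q.natDegree ≤ k :=
    natDegree_Qdiff P (h/2) k ((natDegree_antider_le p).trans (by omega))
  -- Q vanishes on the k+1 grid points
  have hcard : (Finset.Icc (-(k/2 : ℤ)) ((k : ℤ)/2)).card = k + 1 := by
    rw [Int.card_Icc]
    obtain ⟨m, rfl⟩ := hk
    push_cast
    omega
  have hQ0 : Q = 0 := by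
    refine Polynomial.eq_zero_of_natDegree_lt_card_of_eval_eq_zero Q
      (ι := (Finset.Icc (-(k/2 : ℤ)) ((k : ℤ)/2) : Finset ℤ))
      (f := fun j => xi + (j : ℤ) * Δx) ?_ ?_ ?_
    · intro a b hab
      have h2 : ((a : ℤ) : ℝ) = ((b : ℤ) : ℝ) :=
        mul_right_cancel₀ hΔx.ne' (by linarith)
      exact Subtype.ext (by exact_mod_cast h2)
    · rintro ⟨j, hj⟩
      rw [hQeval]
      have := hz j hj
      convert this using 2 <;> ring
    · rw [Fintype.card_coe, hcard]; omega
  -- derivative of Q is zero: p is h-periodic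
  have hper : ∀ x : ℝ, p.eval (x + h) = p.eval x := by
    have hd : p.comp (X + C (h/2)) = p.comp (X + C (-(h/2))) := by
      have := congrArg derivative hQ0
      rw [hQdef, map_sub, derivative_comp, derivative_comp, derivative_antider] at this
      simpa [sub_eq_zero] using this
    intro x
    have := congrArg (Polynomial.eval (x + h/2)) hd
    rw [eval_comp, eval_comp] at this
    simp only [eval_add, eval_X, eval_C] at this
    convert this using 1 <;> congr 1 <;> ring
  -- periodic polynomial is constant
  have hconst : p = C (p.eval 0) := by
    have hroot : p - C (p.eval 0) = 0 := by
      apply Polynomial.eq_zero_of_infinite_isRoot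
      have hsub : Set.range (fun n : ℕ => (n : ℝ) * h) ⊆ {x | (p - C (p.eval 0)).IsRoot x} := by
        rintro _ ⟨n, rfl⟩
        have : p.eval ((n : ℝ) * h) = p.eval 0 := by
          induction n with
          | zero => simp
          | succ n ih =>
              have : ((n+1 : ℕ) : ℝ) * h = (n : ℝ) * h + h := by push_cast; ring
              rw [this, hper, ih]
        simp [Polynomial.IsRoot, this]
      refine Set.Infinite.mono hsub ?_
      apply Set.infinite_range_of_injective
      intro a b hab
      exact_mod_cast mul_right_cancel₀ hh.ne' hab
    exact sub_eq_zero.mp hroot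
  -- constant must be zero
  have h0mem : (0 : ℤ) ∈ Finset.Icc (-(k/2 : ℤ)) ((k : ℤ)/2) := by
    simp only [Finset.mem_Icc]
    omega
  have hint := hz 0 h0mem
  rw [hconst] at hint
  simp only [eval_C, intervalIntegral.integral_const, smul_eq_mul] at hint
  have hfac : (xi + (0:ℤ) * Δx + h/2 - (xi + (0:ℤ) * Δx - h/2)) = h := by push_cast; ring
  rw [hfac] at hint
  have : p.eval 0 = 0 := by
    rcases mul_eq_zero.mp hint with h' | h'
    · exact absurd h' hh.ne'
    · exact h'
  rw [hconst, this, map_zero]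

lemma natDegree_le_of_mem_degreeLT {q : ℝ[X]} {n : ℕ} (hq : q ∈ degreeLT ℝ (n+1)) :
    q.natDegree ≤ n := by
  rcases eq_or_ne q 0 with rfl | h0
  · simp
  · have := (Polynomial.mem_degreeLT).mp hq
    rw [← Polynomial.natDegree_lt_iff_degree_lt h0] at this
    omega

noncomputable def boxMap (k : ℕ) (Δx h xi : ℝ) :
    (Fin (k+1) → ℝ) →ₗ[ℝ] (Fin (k+1) → ℝ) where
  toFun v := fun m => (1/h) * ∫ ξ in
      (xi + (((m : ℤ) - (k : ℤ)/2 : ℤ) : ℝ) * Δx - h/2)..(xi + (((m : ℤ) - (k : ℤ)/2 : ℤ) : ℝ) * Δx + h/2),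
      (((degreeLTEquiv ℝ (k+1)).symm v : degreeLT ℝ (k+1)) : ℝ[X]).eval ξ
  map_add' v w := by
    funext m
    have hvw : (((degreeLTEquiv ℝ (k+1)).symm (v+w) : degreeLT ℝ (k+1)) : ℝ[X])
        = ((degreeLTEquiv ℝ (k+1)).symm v : ℝ[X]) + ((degreeLTEquiv ℝ (k+1)).symm w : ℝ[X]) := by
      rw [map_add]; rfl
    simp only [Pi.add_apply, hvw, eval_add]
    rw [intervalIntegral.integral_add
      ((Polynomial.continuous _).intervalIntegrable _ _)
      ((Polynomial.continuous _).intervalIntegrable _ _)]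
    ring
  map_smul' c v := by
    funext m
    have hcv : (((degreeLTEquiv ℝ (k+1)).symm (c • v) : degreeLT ℝ (k+1)) : ℝ[X])
        = c • ((degreeLTEquiv ℝ (k+1)).symm v : ℝ[X]) := by
      rw [map_smul]; rfl
    simp only [Pi.smul_apply, smul_eq_mul, RingHom.id_apply, hcv, Polynomial.eval_smul,
      smul_eq_mul]
    rw [intervalIntegral.integral_const_mul]
    ring

theorem stmt8 (k : ℕ) (hk : Even k) (Δx h xi : ℝ) (hΔx : 0 < Δx) (hh : 0 < h)
    (U : ℤ → ℝ) :
    ∃! p : Polynomial ℝ, p.natDegree ≤ k ∧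
      ∀ j ∈ Finset.Icc (-(k/2 : ℤ)) ((k : ℤ)/2),
        (1/h) * ∫ ξ in (xi + j * Δx - h/2)..(xi + j * Δx + h/2), p.eval ξ = U j := by
  -- injectivity of boxMap
  have hinj : Function.Injective (boxMap k Δx h xi) := by
    intro v w hvw
    rw [← sub_eq_zero, ← map_sub] at hvw
    set u := v - w with hu
    set q : ℝ[X] := (((degreeLTEquiv ℝ (k+1)).symm u : degreeLT ℝ (k+1)) : ℝ[X]) with hq
    have hq0 : q = 0 := by
      apply key_zero k hk Δx h xi hΔx hh q
        (natDegree_le_of_mem_degreeLT ((degreeLTEquiv ℝ (k+1)).symm u).2)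
      intro j hj
      rw [Finset.mem_Icc] at hj
      have hjk : 0 ≤ j + (k : ℤ)/2 ∧ j + (k : ℤ)/2 < (k : ℤ) + 1 := by omega
      set m : Fin (k+1) := ⟨(j + (k : ℤ)/2).toNat, by omega⟩ with hm
      have hmj : ((m : ℕ) : ℤ) - (k : ℤ)/2 = j := by
        simp only [hm]
        omega
      have := congrFun hvw m
      simp only [boxMap, LinearMap.coe_mk, AddHom.coe_mk, Pi.zero_apply] at this
      rw [hmj] at this
      rcases mul_eq_zero.mp this with h' | h'
      · exact absurd h' (one_div_ne_zero hh.ne')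
      · exact h'
    have : ((degreeLTEquiv ℝ (k+1)).symm u : degreeLT ℝ (k+1)) = 0 := Subtype.ext hq0
    have hu0 : u = 0 := by
      have := congrArg (degreeLTEquiv ℝ (k+1)) this
      simpa using this
    rw [hu] at hu0
    exact sub_eq_zero.mp hu0
  have hsurj : Function.Surjective (boxMap k Δx h xi) :=
    (LinearMap.injective_iff_surjective).mp hinj
  obtain ⟨v, hv⟩ := hsurj (fun m => U ((m : ℤ) - (k : ℤ)/2))
  set p : ℝ[X] := (((degreeLTEquiv ℝ (k+1)).symm v : degreeLT ℝ (k+1)) : ℝ[X]) with hp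
  have hpdeg : p.natDegree ≤ k :=
    natDegree_le_of_mem_degreeLT ((degreeLTEquiv ℝ (k+1)).symm v).2
  have hpcond : ∀ j ∈ Finset.Icc (-(k/2 : ℤ)) ((k : ℤ)/2),
      (1/h) * ∫ ξ in (xi + j * Δx - h/2)..(xi + j * Δx + h/2), p.eval ξ = U j := by
    intro j hj
    rw [Finset.mem_Icc] at hj
    have hjk : 0 ≤ j + (k : ℤ)/2 ∧ j + (k : ℤ)/2 < (k : ℤ) + 1 := by omega
    set m : Fin (k+1) := ⟨(j + (k : ℤ)/2).toNat, by omega⟩ with hm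
    have hmj : ((m : ℕ) : ℤ) - (k : ℤ)/2 = j := by
      simp only [hm]
      omega
    have := congrFun hv m
    simp only [boxMap, LinearMap.coe_mk, AddHom.coe_mk] at this
    rw [hmj] at this
    exact this
  refine ⟨p, ⟨hpdeg, hpcond⟩, ?_⟩
  rintro q ⟨hqdeg, hqcond⟩
  have hd : q - p = 0 := by
    apply key_zero k hk Δx h xi hΔx hh (q - p)
      ((Polynomial.natDegree_sub_le _ _).trans (by omega))
    intro j hj
    have h1 := hqcond j hj
    have h2 := hpcond j hj
    have heq : (∫ ξ in (xi + j * Δx - h/2)..(xi + j * Δx + h/2), q.eval ξ)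
        = ∫ ξ in (xi + j * Δx - h/2)..(xi + j * Δx + h/2), p.eval ξ :=
      mul_left_cancel₀ (one_div_ne_zero hh.ne') (h1.trans h2.symm)
    simp only [eval_sub]
    rw [intervalIntegral.integral_sub
      ((Polynomial.continuous _).intervalIntegrable _ _)
      ((Polynomial.continuous _).intervalIntegrable _ _), heq, sub_self]
  exact sub_eq_zero.mp hd
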